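/- arXiv:1709.08139 — 9 statements merged into one kernel-verified Lean document; each statement's English description precedes it below -/
import Mathlib

section
/- (Hunter's single-row perturbation formula.) Let W be an n×n row-stochastic, irreducible, aperiodic matrix with stationary distribution π and mean first passage time matrix (m_{ij}). Let W̃ be another row-stochastic, irreducible, aperiodic matrix that differs from W only in row r, with perturbations ε_k = w̃_{rk} − w_{rk} (so Σ_k ε_k = 0), and let π̃ be the stationary distribution of W̃. Then for every state j, π_j − π̃_j = π_j · π̃_r · Σ_{k ≠ j} ε_k m_{kj}. -/
open Matrix Finset Filter

/-- `W` is row-stochastic: nonnegative entries, each row sums to 1. -/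
def RowStochastic {n : ℕ} (W : Matrix (Fin n) (Fin n) ℝ) : Prop :=
  (∀ i j, 0 ≤ W i j) ∧ ∀ i, ∑ j, W i j = 1

/-- `W` is irreducible and aperiodic, i.e. primitive: some power has all entries positive. -/
def Primitive {n : ℕ} (W : Matrix (Fin n) (Fin n) ℝ) : Prop :=
  ∃ N : ℕ, ∀ i j, 0 < (W ^ N) i j

/-- `π` is the stationary distribution of `W`: positive entries, summing to 1, `πᵀ W = πᵀ`. -/
def IsStationaryDist {n : ℕ} (W : Matrix (Fin n) (Fin n) ℝ) (π : Fin n → ℝ) : Prop :=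
  (∀ i, 0 < π i) ∧ (∑ i, π i = 1) ∧ π ᵥ* W = π

/-- `M` is a mean first passage time matrix of `W`: positive entries satisfying the
one-hop conditioning equations `m i j = 1 + ∑_{k ≠ j} w i k * m k j`. -/
def IsMFPT {n : ℕ} (W M : Matrix (Fin n) (Fin n) ℝ) : Prop :=
  (∀ i j, 0 < M i j) ∧ ∀ i j, M i j = 1 + ∑ k, if k ≠ j then W i k * M k j else 0

/-- Hunter's single-row perturbation formula. If `W̃` differs from `W`
only in row `r`, with perturbations `ε k = W̃ r k − W r k`, then for every state `j`,
`π j − π̃ j = π j · π̃ r · ∑_{k ≠ j} ε k · m k j`. -/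
theorem hunter_single_row_perturbation {n : ℕ}
    (W W' : Matrix (Fin n) (Fin n) ℝ) (π π' : Fin n → ℝ) (M : Matrix (Fin n) (Fin n) ℝ)
    (hW : RowStochastic W) (hprim : Primitive W) (hπ : IsStationaryDist W π)
    (hM : IsMFPT W M)
    (hW' : RowStochastic W') (hprim' : Primitive W') (hπ' : IsStationaryDist W' π')
    (r : Fin n) (hrow : ∀ i, i ≠ r → ∀ k, W' i k = W i k) :
    ∀ j, π j - π' j =
      π j * π' r * ∑ k, if k ≠ j then (W' r k - W r k) * M k j else 0 := by
  obtain ⟨hMpos, hMeq⟩ := hM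
  obtain ⟨hπpos, hπsum, hπW⟩ := hπ
  obtain ⟨hπ'pos, hπ'sum, hπ'W⟩ := hπ'
  intro j
  set S := ∑ k, if k ≠ j then (W' r k - W r k) * M k j else 0 with hSdef
  -- general identity: for a probability-like vector v,
  -- ∑ i, v i * M i j = 1 + ∑_{k≠j} (v ᵥ* W) k * M k j
  have key : ∀ v : Fin n → ℝ, (∑ i, v i = 1) →
      ∑ i, v i * M i j = 1 + ∑ k, if k ≠ j then (v ᵥ* W) k * M k j else 0 := by
    intro v hv
    calc ∑ i, v i * M i j
        = ∑ i, (v i + ∑ k, v i * (if k ≠ j then W i k * M k j else 0)) := by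
          refine Finset.sum_congr rfl fun i _ => ?_
          rw [hMeq i j, mul_add, mul_one, Finset.mul_sum]
      _ = ∑ i, v i + ∑ i, ∑ k, v i * (if k ≠ j then W i k * M k j else 0) := by
          rw [Finset.sum_add_distrib]
      _ = 1 + ∑ k, ∑ i, v i * (if k ≠ j then W i k * M k j else 0) := by
          rw [hv, Finset.sum_comm]
      _ = 1 + ∑ k, if k ≠ j then (v ᵥ* W) k * M k j else 0 := by
          congr 1
          refine Finset.sum_congr rfl fun k _ => ?_
          by_cases hk : k ≠ j
          · simp only [if_pos hk, Matrix.vecMul, dotProduct, Finset.sum_mul]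
            exact Finset.sum_congr rfl fun i _ => by ring
          · simp [hk]
  -- splitting a sum at j
  have split : ∀ v : Fin n → ℝ,
      ∑ k, v k * M k j = (∑ k, if k ≠ j then v k * M k j else 0) + v j * M j j := by
    intro v
    have h1 : ∑ k, (if k ≠ j then v k * M k j else 0)
        = ∑ k ∈ Finset.univ.erase j, v k * M k j := by
      rw [Finset.sum_ite, Finset.sum_const_zero, add_zero]
      congr 1
      ext k
      simp [Finset.mem_erase]
    rw [h1, Finset.sum_erase_add _ _ (Finset.mem_univ j)]
  -- π j * M j j = 1
  have hA : π j * M j j = 1 := by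
    have h := key π hπsum
    rw [hπW, split π] at h
    linarith
  -- (π' ᵥ* W) k = π' k - π' r * ε k
  have hdiff : ∀ k, (π' ᵥ* W) k = π' k - π' r * (W' r k - W r k) := by
    intro k
    have h1 : (π' ᵥ* W') k = π' k := by rw [hπ'W]
    have h2 : (π' ᵥ* W') k - (π' ᵥ* W) k = π' r * (W' r k - W r k) := by
      simp only [Matrix.vecMul, dotProduct]
      rw [← Finset.sum_sub_distrib, Finset.sum_eq_single r]
      · ring
      · intro i _ hi; rw [hrow i hi]; ring
      · simp
    linarith
  -- π' j * M j j = 1 - π' r * S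
  have hB : π' j * M j j = 1 - π' r * S := by
    have h := key π' hπ'sum
    rw [split π'] at h
    have h3 : ∑ k, (if k ≠ j then (π' ᵥ* W) k * M k j else 0)
        = (∑ k, if k ≠ j then π' k * M k j else 0) - π' r * S := by
      rw [hSdef, Finset.mul_sum, ← Finset.sum_sub_distrib]
      refine Finset.sum_congr rfl fun k _ => ?_
      by_cases hk : k ≠ j
      · simp only [if_pos hk, hdiff k]; ring
      · simp [hk]
    rw [h3] at h
    linarith
  have hne : M j j ≠ 0 := (hMpos j j).ne'
  have hmain : (π j - π' j) * M j j = (π j * π' r * S) * M j j := by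
    have : π j * M j j * (π' r * S) = π' r * S := by rw [hA, one_mul]
    nlinarith [hA, hB, this]
  exact mul_right_cancel₀ hne hmain
end

section
/- (Single-edge perturbation, general formula.) Let W be an n×n row-stochastic, irreducible, aperiodic matrix with stationary distribution π and mean first passage time matrix (m_{ij}), satisfying rational selfishness at node r. Let W̃ be the single-edge perturbation of W by edge (r,c) with weight θ, assumed irreducible and aperiodic, with stationary distribution π̃. Then for every state j, π̃_j = π_j · [ 1 − θ·(m_{cj}·(1 − δ{j=c}) − m_{rj} + 1) / (m_{rr} + θ·(m_{cr} − m_{rr} + 1)) ], where δ{j=c} is 1 if j = c and 0 otherwise. -/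
open Matrix Finset Filter

/-- The single-edge perturbation `W̃ = W − θ·diag(e r)·W + θ·(e r)(e c)ᵀ` of `W` by the
directed edge `(r, c)` with weight `θ`: row `r` of `W` is multiplied by `1 − θ` and `θ`
is added in entry `(r, c)`. -/
def EdgePerturb {n : ℕ} (W : Matrix (Fin n) (Fin n) ℝ) (r c : Fin n) (θ : ℝ) :
    Matrix (Fin n) (Fin n) ℝ :=
  Matrix.of fun i j => if i = r then (1 - θ) * W i j + (if j = c then θ else 0) else W i j

lemma sum_ite_ne_sub {n : ℕ} (j : Fin n) (a : Fin n → ℝ) :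
    ∑ k, (if k ≠ j then a k else 0) = (∑ k, a k) - a j := by
  have h : (∑ k, (if k ≠ j then a k else 0)) + ∑ k, (if k = j then a k else 0)
      = ∑ k, a k := by
    rw [← Finset.sum_add_distrib]
    refine Finset.sum_congr rfl fun k _ => ?_
    by_cases hk : k = j <;> simp [hk]
  rw [Finset.sum_ite_eq' Finset.univ j a] at h
  simp only [Finset.mem_univ, if_true] at h
  linarith

lemma key {n : ℕ} (W M : Matrix (Fin n) (Fin n) ℝ)
    (hMe : ∀ i j, M i j = 1 + ∑ k, if k ≠ j then W i k * M k j else 0)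
    (r c : Fin n) (t : ℝ) (v : Fin n → ℝ) (hv1 : ∑ i, v i = 1)
    (hstat : v ᵥ* (EdgePerturb W r c t) = v) (j : Fin n) :
    v j * M j j = 1 - t * v r * (M c j * (if j = c then 0 else 1) - M r j + 1) := by
  set E := EdgePerturb W r c t with hE
  have hk : ∀ k, ∑ i, v i * E i k = v k := by
    intro k
    have := congrFun hstat k
    simpa [Matrix.vecMul, dotProduct] using this
  have T2 : ∑ k, (if k ≠ j then v k * M k j else 0)
      = ∑ i, v i * (∑ k, if k ≠ j then E i k * M k j else 0) := by
    calc ∑ k, (if k ≠ j then v k * M k j else 0)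
        = ∑ k, (if k ≠ j then (∑ i, v i * E i k) * M k j else 0) := by
          refine Finset.sum_congr rfl fun k _ => ?_
          rw [hk k]
      _ = ∑ k, ∑ i, (if k ≠ j then v i * E i k * M k j else 0) := by
          refine Finset.sum_congr rfl fun k _ => ?_
          by_cases h : k = j
          · simp [h]
          · simp only [h, ne_eq, not_false_iff, if_true]
            rw [Finset.sum_mul]
      _ = ∑ i, ∑ k, (if k ≠ j then v i * E i k * M k j else 0) := Finset.sum_comm
      _ = ∑ i, v i * (∑ k, if k ≠ j then E i k * M k j else 0) := by
          refine Finset.sum_congr rfl fun i _ => ?_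
          rw [Finset.mul_sum]
          refine Finset.sum_congr rfl fun k _ => ?_
          by_cases h : k = j <;> simp [h, mul_assoc]
  have hA : ∀ i, i ≠ r → (∑ k, if k ≠ j then E i k * M k j else 0) = M i j - 1 := by
    intro i hi
    have he : ∀ k, E i k = W i k := by intro k; simp [hE, EdgePerturb, hi]
    simp only [he]
    have := hMe i j
    linarith
  have h1 : ∀ k, E r k = (1 - t) * W r k + (if k = c then t else 0) := by
    intro k; simp [hE, EdgePerturb]
  have expand : ∀ k, (if k ≠ j then E r k * M k j else 0)
      = (1 - t) * (if k ≠ j then W r k * M k j else 0)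
        + (if k = c then t * (M c j * (if j = c then (0:ℝ) else 1)) else 0) := by
    intro k
    rw [h1 k]
    by_cases hkc : k = c
    · subst hkc
      by_cases hkj : k = j
      · subst hkj
        simp
      · have hjk : ¬ j = k := fun h => hkj h.symm
        simp [hkj, hjk]
        ring
    · by_cases hkj : k = j
      · have hjc : ¬ j = c := fun h => hkc (hkj.trans h)
        simp [hkj, hkc, hjc]
      · simp [hkj, hkc]
        ring
  have hAr : (∑ k, if k ≠ j then E r k * M k j else 0)
      = (1 - t) * (M r j - 1) + t * (M c j * (if j = c then (0:ℝ) else 1)) := by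
    rw [Finset.sum_congr rfl fun k _ => expand k, Finset.sum_add_distrib,
      ← Finset.mul_sum, Finset.sum_ite_eq' Finset.univ c]
    simp only [Finset.mem_univ, if_true]
    have h2 : (∑ k, if k ≠ j then W r k * M k j else 0) = M r j - 1 := by
      have := hMe r j; linarith
    rw [h2]
  have T3 : ∑ i, v i * (∑ k, if k ≠ j then E i k * M k j else 0)
      = (∑ i, v i * M i j) - 1
        + v r * (t * (M c j * (if j = c then (0:ℝ) else 1)) - t * (M r j - 1)) := by
    have step : ∑ i, v i * (∑ k, if k ≠ j then E i k * M k j else 0)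
        = ∑ i, (v i * (M i j - 1)
            + (if i = r then v r * (t * (M c j * (if j = c then (0:ℝ) else 1))
                - t * (M r j - 1)) else 0)) := by
      refine Finset.sum_congr rfl fun i _ => ?_
      by_cases hi : i = r
      · subst hi
        rw [hAr]
        simp
        ring
      · rw [hA i hi]
        simp [hi]
    rw [step, Finset.sum_add_distrib, Finset.sum_ite_eq' Finset.univ r]
    simp only [Finset.mem_univ, if_true]
    have hsub : ∑ i, v i * (M i j - 1) = (∑ i, v i * M i j) - 1 := by
      have : ∑ i, v i * (M i j - 1) = (∑ i, v i * M i j) - ∑ i, v i := by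
        rw [← Finset.sum_sub_distrib]
        exact Finset.sum_congr rfl fun i _ => by ring
      rw [this, hv1]
    linarith
  have T1 : ∑ k, (if k ≠ j then v k * M k j else 0) = (∑ k, v k * M k j) - v j * M j j :=
    sum_ite_ne_sub j _
  rw [T2, T3] at T1
  have h3 : v j * M j j
      = 1 - v r * (t * (M c j * (if j = c then (0:ℝ) else 1)) - t * (M r j - 1)) := by
    linarith
  rw [h3]; ring

/-- Single-edge perturbation, general formula. -/
theorem single_edge_perturbation {n : ℕ}
    (W : Matrix (Fin n) (Fin n) ℝ) (π : Fin n → ℝ) (M : Matrix (Fin n) (Fin n) ℝ)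
    (hW : RowStochastic W) (hprim : Primitive W) (hπ : IsStationaryDist W π) (hM : IsMFPT W M)
    (r c : Fin n) (hrc : r ≠ c) (hWrc : W r c = 0)
    (θ : ℝ) (hθ0 : 0 < θ) (hθ1 : θ ≤ 1)
    (hself : ∀ j, j ≠ r → W r j < W r r)
    (π' : Fin n → ℝ) (hprim' : Primitive (EdgePerturb W r c θ))
    (hπ' : IsStationaryDist (EdgePerturb W r c θ) π') :
    ∀ j, π' j = π j *
      (1 - θ * (M c j * (if j = c then 0 else 1) - M r j + 1) /
        (M r r + θ * (M c r - M r r + 1))) := by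
  intro j
  have h0 : EdgePerturb W r c 0 = W := by
    ext i k
    simp [EdgePerturb]
  have hKac := key W M hM.2 r c 0 π hπ.2.1 (by rw [h0]; exact hπ.2.2) j
  simp only [zero_mul, mul_zero, sub_zero, zero_sub] at hKac
  -- hKac : π j * M j j = 1 (after simp: 1 - 0 * ...)
  have h1 := key W M hM.2 r c θ π' hπ'.2.1 hπ'.2.2 j
  have h1r := key W M hM.2 r c θ π' hπ'.2.1 hπ'.2.2 r
  rw [if_neg hrc] at h1r
  set Δ : ℝ := M r r + θ * (M c r - M r r + 1) with hΔdef
  have hΔ : π' r * Δ = 1 := by rw [hΔdef]; linear_combination h1r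
  have hΔne : Δ ≠ 0 := fun h => by rw [h, mul_zero] at hΔ; exact one_ne_zero hΔ.symm
  have hMne : M j j ≠ 0 := ne_of_gt (hM.1 j j)
  set Aj : ℝ := M c j * (if j = c then 0 else 1) - M r j + 1 with hAdef
  have hmain : (π' j * Δ) * M j j = (π j * (Δ - θ * Aj)) * M j j := by
    linear_combination Δ * h1 - θ * Aj * hΔ - (Δ - θ * Aj) * hKac
  have hcan : π' j * Δ = π j * (Δ - θ * Aj) := mul_right_cancel₀ hMne hmain
  field_simp
  linear_combination hcan
end

section
/- (Single-edge perturbation, source-node formula.) Let W be an n×n row-stochastic, irreducible, aperiodic matrix with stationary distribution π and mean first passage time matrix (m_{ij}), satisfying rational selfishness at node r. Let W̃ be the single-edge perturbation of W by edge (r,c) with weight θ, assumed irreducible and aperiodic, with stationary distribution π̃. Then the denominator m_{rr} + θ·(m_{cr} − m_{rr} + 1) is strictly positive and π̃_r = 1 / (m_{rr} + θ·(m_{cr} − m_{rr} + 1)). -/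
open Matrix Finset Filter

/-- Single-edge perturbation, source-node formula. -/
theorem single_edge_perturbation_source {n : ℕ}
    (W : Matrix (Fin n) (Fin n) ℝ) (π : Fin n → ℝ) (M : Matrix (Fin n) (Fin n) ℝ)
    (hW : RowStochastic W) (hprim : Primitive W) (hπ : IsStationaryDist W π) (hM : IsMFPT W M)
    (r c : Fin n) (hrc : r ≠ c) (hWrc : W r c = 0)
    (θ : ℝ) (hθ0 : 0 < θ) (hθ1 : θ ≤ 1)
    (hself : ∀ j, j ≠ r → W r j < W r r)
    (π' : Fin n → ℝ) (hprim' : Primitive (EdgePerturb W r c θ))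
    (hπ' : IsStationaryDist (EdgePerturb W r c θ) π') :
    0 < M r r + θ * (M c r - M r r + 1) ∧
      π' r = 1 / (M r r + θ * (M c r - M r r + 1)) := by
  obtain ⟨hπ'pos, hπ'sum, hπ'stat⟩ := hπ'
  obtain ⟨hMpos, hMeq⟩ := hM
  set Wt := EdgePerturb W r c θ with hWt
  set D : ℝ := M r r + θ * (M c r - M r r + 1) with hD
  set x : Fin n → ℝ := fun k => if k = r then D else M k r with hx
  -- x satisfies the column-r one-hop equations for the perturbed matrix
  have hxeq : ∀ i, x i = 1 + ∑ k, if k ≠ r then Wt i k * x k else 0 := by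
    intro i
    by_cases hi : i = r
    · rw [hi]
      have hterm : ∀ k, (if k ≠ r then Wt r k * x k else 0)
          = (1 - θ) * (if k ≠ r then W r k * M k r else 0)
            + (if k = c then θ * M k r else 0) := by
        intro k
        by_cases hk : k = r
        · rw [hk]
          simp [hrc]
        · by_cases hkc : k = c
          · rw [hkc]
            have hcr : c ≠ r := Ne.symm hrc
            simp only [hWt, EdgePerturb, Matrix.of_apply, if_pos rfl, hx,
              if_neg hcr, ne_eq, not_false_iff, if_pos hcr, ite_true]
            ring
          · simp only [hWt, EdgePerturb, Matrix.of_apply, if_pos rfl, hx, ne_eq, hk,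
              not_false_eq_true, ite_true, if_neg hkc, if_neg hk, add_zero]
            ring
      rw [Finset.sum_congr rfl (fun k _ => hterm k), Finset.sum_add_distrib,
        ← Finset.mul_sum]
      have h1 : ∑ k, (if k = c then θ * M k r else 0) = θ * M c r := by
        simp
      have h2 : ∑ k, (if k ≠ r then W r k * M k r else 0) = M r r - 1 := by
        have := hMeq r r
        linarith
      rw [h1, h2]
      simp only [hx, if_pos rfl, hD]
      ring
    · have hW' : ∀ k, Wt i k = W i k := by
        intro k; simp [hWt, EdgePerturb, hi]
      have hterm : ∀ k, (if k ≠ r then Wt i k * x k else 0)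
          = (if k ≠ r then W i k * M k r else 0) := by
        intro k
        by_cases hk : k = r
        · simp [hk]
        · simp [hk, hW', hx]
      rw [Finset.sum_congr rfl (fun k _ => hterm k)]
      simp only [hx, if_neg hi]
      exact hMeq i r
  -- Kac-style computation
  have hvec : ∀ k, ∑ i, π' i * Wt i k = π' k := by
    intro k
    have := congrFun hπ'stat k
    simpa [Matrix.vecMul, dotProduct] using this
  have key : ∑ i, π' i * x i = 1 + ∑ k, if k ≠ r then π' k * x k else 0 := by
    calc ∑ i, π' i * x i
        = ∑ i, (π' i + ∑ k, if k ≠ r then π' i * (Wt i k * x k) else 0) := by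
          refine Finset.sum_congr rfl fun i _ => ?_
          rw [hxeq i, mul_add, mul_one, Finset.mul_sum]
          congr 1
          refine Finset.sum_congr rfl fun k _ => ?_
          by_cases hk : k = r <;> simp [hk]
      _ = (∑ i, π' i) + ∑ i, ∑ k, (if k ≠ r then π' i * (Wt i k * x k) else 0) :=
          Finset.sum_add_distrib
      _ = 1 + ∑ k, ∑ i, (if k ≠ r then π' i * (Wt i k * x k) else 0) := by
          rw [hπ'sum, Finset.sum_comm]
      _ = 1 + ∑ k, if k ≠ r then π' k * x k else 0 := by
          congr 1
          refine Finset.sum_congr rfl fun k _ => ?_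
          by_cases hk : k = r
          · simp [hk]
          · have hsm : ∑ i, π' i * (Wt i k * x k) = (∑ i, π' i * Wt i k) * x k := by
              rw [Finset.sum_mul]
              exact Finset.sum_congr rfl fun i _ => by ring
            simp only [ne_eq, hk, not_false_eq_true, ite_true]
            rw [hsm, hvec k]
  have split_aux : ∀ f : Fin n → ℝ, ∑ k, (if k ≠ r then f k else 0) = (∑ k, f k) - f r := by
    intro f
    have h : ∀ k, (if k ≠ r then f k else 0) = f k - (if k = r then f k else 0) := by
      intro k; by_cases hk : k = r <;> simp [hk]
    rw [Finset.sum_congr rfl fun k _ => h k, Finset.sum_sub_distrib]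
    simp
  have hmain : π' r * D = 1 := by
    have hxr : x r = D := by simp [hx]
    rw [split_aux (fun k => π' k * x k)] at key
    simp only [hxr] at key
    linarith [key]
  have hπr := hπ'pos r
  have hDpos : 0 < D := by
    by_contra h
    push_neg at h
    nlinarith
  refine ⟨hDpos, ?_⟩
  field_simp
  linarith [hmain]
end

section
/- Let W be an n×n row-stochastic, irreducible, aperiodic matrix with stationary distribution π and mean first passage time matrix (m_{ij}), satisfying rational selfishness at node r. Let W̃ be the single-edge perturbation of W by edge (r,c) with weight θ, assumed irreducible and aperiodic, with stationary distribution π̃. Then π_r − π̃_r = θ · π_r · π̃_r · (m_{cr} − m_{rr} + 1), equivalently π̃_r = π_r / (1 + θ·π_r·(m_{cr} − m_{rr} + 1)). -/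
open Matrix Finset Filter

/-- `π r − π̃ r = θ · π r · π̃ r · (m c r − m r r + 1)`, equivalently
`π̃ r = π r / (1 + θ · π r · (m c r − m r r + 1))`. -/
theorem single_edge_perturbation_source_alt {n : ℕ}
    (W : Matrix (Fin n) (Fin n) ℝ) (π : Fin n → ℝ) (M : Matrix (Fin n) (Fin n) ℝ)
    (hW : RowStochastic W) (hprim : Primitive W) (hπ : IsStationaryDist W π) (hM : IsMFPT W M)
    (r c : Fin n) (hrc : r ≠ c) (hWrc : W r c = 0)
    (θ : ℝ) (hθ0 : 0 < θ) (hθ1 : θ ≤ 1)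
    (hself : ∀ j, j ≠ r → W r j < W r r)
    (π' : Fin n → ℝ) (hprim' : Primitive (EdgePerturb W r c θ))
    (hπ' : IsStationaryDist (EdgePerturb W r c θ) π') :
    π r - π' r = θ * π r * π' r * (M c r - M r r + 1) ∧
      π' r = π r / (1 + θ * π r * (M c r - M r r + 1)) := by
  -- abbreviations
  have hsplit : ∀ (j : Fin n) (f : Fin n → ℝ),
      ∑ k, (if k ≠ j then f k else 0) = (∑ k, f k) - f j := by
    intro j f
    have h1 : ∑ k, f k =
        ∑ k, ((if k ≠ j then f k else 0) + (if k = j then f k else 0)) := by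
      apply Finset.sum_congr rfl
      intro k _
      by_cases h : k = j <;> simp [h]
    rw [h1, Finset.sum_add_distrib, Finset.sum_ite_eq' Finset.univ j f]
    simp
  -- the generic weighted-sum identity for any vector v
  have key : ∀ (v : Fin n → ℝ) (j : Fin n),
      ∑ i, v i * M i j =
        (∑ i, v i) + ∑ k, (if k ≠ j then (∑ i, v i * W i k) * M k j else 0) := by
    intro v j
    have h1 : ∀ i, v i * M i j
        = v i + ∑ k, (if k ≠ j then v i * (W i k * M k j) else 0) := by
      intro i
      rw [hM.2 i j, mul_add, mul_one, Finset.mul_sum]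
      congr 1
      apply Finset.sum_congr rfl
      intro k _
      by_cases h : k = j <;> simp [h]
    calc ∑ i, v i * M i j
        = ∑ i, (v i + ∑ k, (if k ≠ j then v i * (W i k * M k j) else 0)) :=
          Finset.sum_congr rfl (fun i _ => h1 i)
      _ = (∑ i, v i) + ∑ i, ∑ k, (if k ≠ j then v i * (W i k * M k j) else 0) :=
          Finset.sum_add_distrib
      _ = (∑ i, v i) + ∑ k, ∑ i, (if k ≠ j then v i * (W i k * M k j) else 0) := by
          rw [Finset.sum_comm]
      _ = (∑ i, v i) + ∑ k, (if k ≠ j then (∑ i, v i * W i k) * M k j else 0) := by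
          congr 1
          apply Finset.sum_congr rfl
          intro k _
          by_cases h : k ≠ j
          · rw [if_pos h, Finset.sum_mul]
            exact Finset.sum_congr rfl fun i _ => by rw [if_pos h]; ring
          · simp [h]
  -- (A) Kac's formula: π r * M r r = 1
  have hπW : ∀ k, ∑ i, π i * W i k = π k := by
    intro k
    have := congrFun hπ.2.2 k
    simpa [Matrix.vecMul, dotProduct] using this
  have e1 : π r * M r r = 1 := by
    have h := key π r
    rw [hπ.2.1] at h
    have h2 : ∑ k, (if k ≠ r then (∑ i, π i * W i k) * M k r else 0)
        = ∑ k, (if k ≠ r then π k * M k r else 0) := by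
      apply Finset.sum_congr rfl
      intro k _
      rw [hπW k]
    rw [h2, hsplit r (fun k => π k * M k r)] at h
    linarith
  -- (B) the perturbed identity
  have hpWt : ∀ k, ∑ i, π' i * EdgePerturb W r c θ i k = π' k := by
    intro k
    have := congrFun hπ'.2.2 k
    simpa [Matrix.vecMul, dotProduct] using this
  have hπ'W : ∀ k, ∑ i, π' i * W i k
      = π' k - π' r * (if k = c then θ else 0) + θ * π' r * W r k := by
    intro k
    have h1 : ∀ i, π' i * W i k
        = π' i * EdgePerturb W r c θ i k
          + (if i = r then π' r * (θ * W r k - (if k = c then θ else 0)) else 0) := by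
      intro i
      by_cases h : i = r
      · subst h
        simp only [EdgePerturb, Matrix.of_apply, if_pos rfl, ite_true, if_true]
        ring
      · simp [EdgePerturb, h]
    calc ∑ i, π' i * W i k
        = ∑ i, (π' i * EdgePerturb W r c θ i k
            + (if i = r then π' r * (θ * W r k - (if k = c then θ else 0)) else 0)) :=
          Finset.sum_congr rfl (fun i _ => h1 i)
      _ = (∑ i, π' i * EdgePerturb W r c θ i k)
          + ∑ i, (if i = r then π' r * (θ * W r k - (if k = c then θ else 0)) else 0) :=
          Finset.sum_add_distrib
      _ = π' k + π' r * (θ * W r k - (if k = c then θ else 0)) := by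
          rw [hpWt k, Finset.sum_ite_eq' Finset.univ r]
          simp
      _ = π' k - π' r * (if k = c then θ else 0) + θ * π' r * W r k := by ring
  have e2 : π' r * (M r r + θ * (M c r - M r r + 1)) = 1 := by
    have h := key π' r
    rw [hπ'.2.1] at h
    have h2 : ∑ k, (if k ≠ r then (∑ i, π' i * W i k) * M k r else 0)
        = (∑ k, (if k ≠ r then π' k * M k r else 0))
          - (∑ k, (if k ≠ r then π' r * (if k = c then θ else 0) * M k r else 0))
          + (∑ k, (if k ≠ r then θ * π' r * (W r k * M k r) else 0)) := by
      rw [← Finset.sum_sub_distrib, ← Finset.sum_add_distrib]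
      apply Finset.sum_congr rfl
      intro k _
      by_cases h : k ≠ r
      · rw [if_pos h, if_pos h, if_pos h, if_pos h, hπ'W k]
        ring
      · simp [h]
    have h3 : ∑ k, (if k ≠ r then π' r * (if k = c then θ else 0) * M k r else 0)
        = π' r * θ * M c r := by
      have : ∀ k, (if k ≠ r then π' r * (if k = c then θ else 0) * M k r else 0)
          = (if k = c then π' r * θ * M k r else 0) := by
        intro k
        by_cases hk : k = c
        · have hcr : ¬ (c = r) := Ne.symm hrc
          simp [hk, hcr]
        · by_cases hk' : k ≠ r <;> simp [hk, hk']
      rw [Finset.sum_congr rfl (fun k _ => this k),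
        Finset.sum_ite_eq' Finset.univ c (fun k => π' r * θ * M k r)]
      simp
    have h4 : ∑ k, (if k ≠ r then θ * π' r * (W r k * M k r) else 0)
        = θ * π' r * (M r r - 1) := by
      have h5 : ∑ k, (if k ≠ r then W r k * M k r else 0) = M r r - 1 := by
        have := hM.2 r r
        linarith
      calc ∑ k, (if k ≠ r then θ * π' r * (W r k * M k r) else 0)
          = θ * π' r * ∑ k, (if k ≠ r then W r k * M k r else 0) := by
            rw [Finset.mul_sum]
            apply Finset.sum_congr rfl
            intro k _
            by_cases h : k ≠ r <;> simp [h]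
        _ = θ * π' r * (M r r - 1) := by rw [h5]
    rw [h2, h3, h4, hsplit r (fun k => π' k * M k r)] at h
    nlinarith [h]
  -- final algebra
  have ha : 0 < π r := hπ.1 r
  have hb : 0 < π' r := hπ'.1 r
  have goal1 : π r - π' r = θ * π r * π' r * (M c r - M r r + 1) := by
    linear_combination (π' r) * e1 - (π r) * e2
  refine ⟨goal1, ?_⟩
  have hb' : π' r ≠ 0 := ne_of_gt hb
  have ha' : π r ≠ 0 := ne_of_gt ha
  have hden : 1 + θ * π r * (M c r - M r r + 1) = π r / π' r := by
    rw [eq_div_iff hb']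
    linear_combination -goal1
  rw [hden, div_div_eq_mul_div, mul_comm (π r) (π' r), mul_div_assoc, div_self ha', mul_one]
end

section
/- Let W be an n×n row-stochastic, irreducible, aperiodic matrix with stationary distribution π and mean first passage time matrix (m_{ij}), satisfying rational selfishness at node r. Let W̃ be the single-edge perturbation of W by edge (r,c) with weight θ, assumed irreducible and aperiodic, with stationary distribution π̃. Then for every state j with j ≠ r and j ≠ c, π̃_j = π_j · [ 1 − θ·π̃_r·(m_{cj} − m_{rj} + 1) ]. -/
open Matrix Finset Filter

/-- For every state `j ≠ r, c`,
`π̃ j = π j · (1 − θ · π̃ r · (m c j − m r j + 1))`. -/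
theorem single_edge_perturbation_other {n : ℕ}
    (W : Matrix (Fin n) (Fin n) ℝ) (π : Fin n → ℝ) (M : Matrix (Fin n) (Fin n) ℝ)
    (hW : RowStochastic W) (hprim : Primitive W) (hπ : IsStationaryDist W π) (hM : IsMFPT W M)
    (r c : Fin n) (hrc : r ≠ c) (hWrc : W r c = 0)
    (θ : ℝ) (hθ0 : 0 < θ) (hθ1 : θ ≤ 1)
    (hself : ∀ j, j ≠ r → W r j < W r r)
    (π' : Fin n → ℝ) (hprim' : Primitive (EdgePerturb W r c θ))
    (hπ' : IsStationaryDist (EdgePerturb W r c θ) π') :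
    ∀ j, j ≠ r → j ≠ c →
      π' j = π j * (1 - θ * π' r * (M c j - M r j + 1)) := by
  intro j hjr hjc
  obtain ⟨hπpos, hπsum, hπstat⟩ := hπ
  obtain ⟨hπ'pos, hπ'sum, hπ'stat⟩ := hπ'
  obtain ⟨hMpos, hMeq⟩ := hM
  have hstat : ∀ k, ∑ i, π i * W i k = π k := by
    intro k
    have := congrFun hπstat k
    simpa [Matrix.vecMul, dotProduct] using this
  have hstat' : ∀ k, ∑ i, π' i * EdgePerturb W r c θ i k = π' k := by
    intro k
    have := congrFun hπ'stat k
    simpa [Matrix.vecMul, dotProduct] using this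
  have hEP : ∀ i k, EdgePerturb W r c θ i k
      = W i k + (if i = r then θ * ((if k = c then (1:ℝ) else 0) - W r k) else 0) := by
    intro i k
    simp only [EdgePerturb, Matrix.of_apply]
    split_ifs with h1 h2 <;> subst_vars <;> ring
  -- the perturbation vector equation: (π' - π)(I - W) = g
  have hg : ∀ k, (π' k - π k) - ((∑ i, π' i * W i k) - ∑ i, π i * W i k)
      = θ * π' r * ((if k = c then (1:ℝ) else 0) - W r k) := by
    intro k
    have h1 : ∑ i, π' i * EdgePerturb W r c θ i k
        = (∑ i, π' i * W i k) + θ * π' r * ((if k = c then (1:ℝ) else 0) - W r k) := by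
      have e1 : ∑ i, π' i * EdgePerturb W r c θ i k
          = ∑ i, (π' i * W i k
              + (if i = r then π' i * (θ * ((if k = c then (1:ℝ) else 0) - W r k)) else 0)) := by
        refine Finset.sum_congr rfl fun i _ => ?_
        rw [hEP]
        by_cases hi : i = r <;> simp [hi] <;> ring
      rw [e1, Finset.sum_add_distrib, Finset.sum_ite_eq' Finset.univ r]
      simp only [Finset.mem_univ, if_true]
      ring
    have h2 := hstat' k
    have h3 := hstat k
    rw [h1] at h2
    linear_combination h3 - h2
  -- the column vector u
  set u : Fin n → ℝ := fun k => if k = j then 0 else M k j with hu_def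
  have hMu : ∀ i, ∑ k, W i k * u k = M i j - 1 := by
    intro i
    have e1 : ∑ k, W i k * u k = ∑ k, if k ≠ j then W i k * M k j else 0 := by
      refine Finset.sum_congr rfl fun k _ => ?_
      by_cases hk : k = j <;> simp [hu_def, hk]
    rw [e1]
    linarith [hMeq i j]
  have hdsum : ∑ k, (π' k - π k) = 0 := by
    rw [Finset.sum_sub_distrib, hπsum, hπ'sum]; ring
  -- evaluate the pairing two ways
  have key : ∑ k, ((π' k - π k) - ((∑ i, π' i * W i k) - ∑ i, π i * W i k)) * u k
      = θ * π' r * (M c j - M r j + 1) := by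
    have e1 : ∑ k, ((π' k - π k) - ((∑ i, π' i * W i k) - ∑ i, π i * W i k)) * u k
        = ∑ k, ((if k = c then θ * π' r * u k else 0) - θ * π' r * (W r k * u k)) := by
      refine Finset.sum_congr rfl fun k _ => ?_
      rw [hg k]
      by_cases hk : k = c <;> simp [hk] <;> ring
    rw [e1, Finset.sum_sub_distrib, Finset.sum_ite_eq' Finset.univ c,
      ← Finset.mul_sum, hMu r]
    have huc : u c = M c j := by simp [hu_def, Ne.symm hjc]
    simp only [Finset.mem_univ, if_true, huc]
    ring
  have key2 : ∑ k, ((π' k - π k) - ((∑ i, π' i * W i k) - ∑ i, π i * W i k)) * u k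
      = -(π' j - π j) * M j j := by
    have hsplit : ∑ k, ((π' k - π k) - ((∑ i, π' i * W i k) - ∑ i, π i * W i k)) * u k
        = (∑ k, (π' k - π k) * u k)
          - ∑ k, (∑ i, (π' i - π i) * W i k) * u k := by
      rw [← Finset.sum_sub_distrib]
      refine Finset.sum_congr rfl fun k _ => ?_
      have : ∑ i, (π' i - π i) * W i k = (∑ i, π' i * W i k) - ∑ i, π i * W i k := by
        rw [← Finset.sum_sub_distrib]
        exact Finset.sum_congr rfl fun i _ => by ring
      rw [this]; ring
    have h5 : ∑ k, (∑ i, (π' i - π i) * W i k) * u k = ∑ i, (π' i - π i) * (M i j - 1) := by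
      calc ∑ k, (∑ i, (π' i - π i) * W i k) * u k
          = ∑ k, ∑ i, (π' i - π i) * (W i k * u k) := by
            refine Finset.sum_congr rfl fun k _ => ?_
            rw [Finset.sum_mul]
            exact Finset.sum_congr rfl fun i _ => by ring
        _ = ∑ i, ∑ k, (π' i - π i) * (W i k * u k) := Finset.sum_comm
        _ = ∑ i, (π' i - π i) * ∑ k, W i k * u k := by
            exact Finset.sum_congr rfl fun i _ => by rw [Finset.mul_sum]
        _ = ∑ i, (π' i - π i) * (M i j - 1) :=
            Finset.sum_congr rfl fun i _ => by rw [hMu i]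
    have h6 : ∑ k, (π' k - π k) * u k
        = (∑ k, (π' k - π k) * M k j) - (π' j - π j) * M j j := by
      have e2 : ∑ k, (π' k - π k) * u k
          = ∑ k, ((π' k - π k) * M k j - if k = j then (π' k - π k) * M k j else 0) := by
        refine Finset.sum_congr rfl fun k _ => ?_
        by_cases hk : k = j <;> simp [hu_def, hk]
      rw [e2, Finset.sum_sub_distrib, Finset.sum_ite_eq' Finset.univ j]
      simp
    have h7 : ∑ i, (π' i - π i) * (M i j - 1)
        = (∑ i, (π' i - π i) * M i j) - ∑ i, (π' i - π i) := by
      rw [← Finset.sum_sub_distrib]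
      exact Finset.sum_congr rfl fun i _ => by ring
    rw [hsplit, h5, h6, h7, hdsum]
    ring
  -- π j * M j j = 1
  have hπM : π j * M j j = 1 := by
    have h8 : ∑ i, π i * M i j = 1 + ((∑ k, π k * M k j) - π j * M j j) := by
      calc ∑ i, π i * M i j
          = ∑ i, (π i + ∑ k, if k ≠ j then π i * (W i k * M k j) else 0) := by
            refine Finset.sum_congr rfl fun i _ => ?_
            rw [hMeq i j, mul_add, mul_one, Finset.mul_sum]
            congr 1
            refine Finset.sum_congr rfl fun k _ => ?_
            by_cases hk : k = j <;> simp [hk] <;> ring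
        _ = 1 + ∑ i, ∑ k, (if k ≠ j then π i * (W i k * M k j) else 0) := by
            rw [Finset.sum_add_distrib, hπsum]
        _ = 1 + ∑ k, ∑ i, (if k ≠ j then π i * (W i k * M k j) else 0) := by
            rw [Finset.sum_comm]
        _ = 1 + ∑ k, (if k ≠ j then (∑ i, π i * W i k) * M k j else 0) := by
            congr 1
            refine Finset.sum_congr rfl fun k _ => ?_
            by_cases hk : k = j
            · simp [hk]
            · simp only [hk, ne_eq, not_false_iff, if_true]
              rw [Finset.sum_mul]
              exact Finset.sum_congr rfl fun i _ => by ring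
        _ = 1 + ∑ k, (if k ≠ j then π k * M k j else 0) := by
            congr 1
            refine Finset.sum_congr rfl fun k _ => ?_
            by_cases hk : k = j <;> simp [hk, hstat k]
        _ = 1 + ((∑ k, π k * M k j) - π j * M j j) := by
            congr 1
            have : ∑ k, (if k ≠ j then π k * M k j else 0)
                = ∑ k, (π k * M k j - if k = j then π k * M k j else 0) := by
              refine Finset.sum_congr rfl fun k _ => ?_
              by_cases hk : k = j <;> simp [hk]
            rw [this, Finset.sum_sub_distrib, Finset.sum_ite_eq' Finset.univ j]
            simp
    linarith
  have hdj : -(π' j - π j) * M j j = θ * π' r * (M c j - M r j + 1) := by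
    rw [← key2, key]
  have hfin : π' j - π j = π j * (-(θ * π' r * (M c j - M r j + 1))) := by
    calc π' j - π j = (π' j - π j) * (π j * M j j) := by rw [hπM, mul_one]
      _ = (-(-(π' j - π j) * M j j)) * π j := by ring
      _ = (-(θ * π' r * (M c j - M r j + 1))) * π j := by rw [hdj]
      _ = π j * (-(θ * π' r * (M c j - M r j + 1))) := by ring
  linear_combination hfin
end

section
/- (Quantitative form of Corollary on small-centrality sources.) Let W be an n×n row-stochastic, irreducible, aperiodic matrix with stationary distribution π and mean first passage time matrix (m_{ij}), satisfying rational selfishness at node r, and let θ ∈ (0,1). Let W̃ be the single-edge perturbation of W by edge (r,c) with weight θ, assumed irreducible and aperiodic, with stationary distribution π̃. Then for every state j, |π̃_j − π_j| ≤ π_r · π_j · (θ/(1−θ)) · |m_{cj}·(1 − δ{j=c}) − m_{rj} + 1|. In particular, the perturbation of the stationary distribution vanishes as the centrality π_r of the edge's source tends to 0 (with the mean first passage times bounded). -/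
open Matrix Finset Filter

/-- Quantitative form of the small-centrality-source corollary. -/
theorem stationary_perturbation_bound {n : ℕ}
    (W : Matrix (Fin n) (Fin n) ℝ) (π : Fin n → ℝ) (M : Matrix (Fin n) (Fin n) ℝ)
    (hW : RowStochastic W) (hprim : Primitive W) (hπ : IsStationaryDist W π) (hM : IsMFPT W M)
    (r c : Fin n) (hrc : r ≠ c) (hWrc : W r c = 0)
    (θ : ℝ) (hθ0 : 0 < θ) (hθ1 : θ < 1)
    (hself : ∀ j, j ≠ r → W r j < W r r)
    (π' : Fin n → ℝ) (hprim' : Primitive (EdgePerturb W r c θ))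
    (hπ' : IsStationaryDist (EdgePerturb W r c θ) π') :
    ∀ j, |π' j - π j| ≤
      π r * π j * (θ / (1 - θ)) *
        |M c j * (if j = c then 0 else 1) - M r j + 1| := by
  obtain ⟨hWpos, hWrow⟩ := hW
  obtain ⟨hπpos, hπsum, hπstat⟩ := hπ
  obtain ⟨hMpos, hMeq⟩ := hM
  obtain ⟨hπ'pos, hπ'sum, hπ'stat⟩ := hπ'
  have h1θ : (0:ℝ) < 1 - θ := by linarith
  -- pointwise stationarity for π
  have hstat : ∀ k, ∑ i, π i * W i k = π k := by
    intro k
    have h := congrFun hπstat k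
    simpa [Matrix.vecMul, dotProduct] using h
  -- pointwise stationarity for π'
  have hstat' : ∀ j, ∑ i, π' i * W i j
      = π' j + θ * π' r * W r j - θ * π' r * (if j = c then 1 else 0) := by
    intro j
    have h := congrFun hπ'stat j
    have hexp : ∀ i, π' i * (EdgePerturb W r c θ) i j
        = π' i * W i j + (if i = r then π' i * ((if j = c then θ else 0) - θ * W i j) else 0) := by
      intro i
      simp only [EdgePerturb, Matrix.of_apply]
      split_ifs <;> ring
    have h2 : ∑ i, π' i * (EdgePerturb W r c θ) i j
        = (∑ i, π' i * W i j) + π' r * ((if j = c then θ else 0) - θ * W r j) := by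
      rw [Finset.sum_congr rfl fun i _ => hexp i, Finset.sum_add_distrib,
        Finset.sum_ite_eq' Finset.univ r]
      simp
    have h3 : ∑ i, π' i * (EdgePerturb W r c θ) i j = π' j := by
      simpa [Matrix.vecMul, dotProduct] using h
    rw [h2] at h3
    split_ifs at h3 ⊢ with hc <;> · linarith
  -- one-hop identity in closed form
  have hC : ∀ i j, ∑ k, W i k * M k j = M i j - 1 + W i j * M j j := by
    intro i j
    have h := hMeq i j
    have hsplit : ∀ k, (if k ≠ j then W i k * M k j else 0)
        = W i k * M k j - (if k = j then W i k * M k j else 0) := by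
      intro k; rcases eq_or_ne k j with h | h <;> simp [h]
    rw [Finset.sum_congr rfl fun k _ => hsplit k, Finset.sum_sub_distrib,
      Finset.sum_ite_eq' Finset.univ j] at h
    simp only [Finset.mem_univ, if_true] at h
    linarith
  -- π j * M j j = 1
  have hD : ∀ j, π j * M j j = 1 := by
    intro j
    have h1 : ∑ i, π i * M i j = 1 + ∑ k, (if k ≠ j then π k * M k j else 0) := by
      calc ∑ i, π i * M i j
          = ∑ i, (π i + ∑ k, (if k ≠ j then π i * (W i k * M k j) else 0)) := by
            refine Finset.sum_congr rfl fun i _ => ?_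
            rw [hMeq i j, mul_add, mul_one, Finset.mul_sum]
            congr 1
            refine Finset.sum_congr rfl fun k _ => ?_
            split_ifs <;> simp
        _ = (∑ i, π i) + ∑ i, ∑ k, (if k ≠ j then π i * (W i k * M k j) else 0) := by
            rw [Finset.sum_add_distrib]
        _ = 1 + ∑ k, (if k ≠ j then (∑ i, π i * W i k) * M k j else 0) := by
            rw [hπsum, Finset.sum_comm]
            congr 1
            refine Finset.sum_congr rfl fun k _ => ?_
            split_ifs with h
            · rw [Finset.sum_mul]; refine Finset.sum_congr rfl fun i _ => by ring
            · simp
        _ = 1 + ∑ k, (if k ≠ j then π k * M k j else 0) := by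
            congr 1
            refine Finset.sum_congr rfl fun k _ => ?_
            rw [hstat k]
    have hsplit : ∀ i, π i * M i j
        = (if i = j then π i * M i j else 0) + (if i ≠ j then π i * M i j else 0) := by
      intro i; rcases eq_or_ne i j with h | h <;> simp [h]
    have h2 : ∑ i, π i * M i j
        = π j * M j j + ∑ i, (if i ≠ j then π i * M i j else 0) := by
      rw [Finset.sum_congr rfl fun i _ => hsplit i, Finset.sum_add_distrib,
        Finset.sum_ite_eq' Finset.univ j]
      simp
    rw [h2] at h1
    linarith
  -- the difference vector and the inhomogeneity
  set u : Fin n → ℝ := fun j => π' j - π j with hu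
  set q : Fin n → ℝ := fun j => θ * π' r * ((if j = c then 1 else 0) - W r j) with hq
  have hsum_u : ∑ j, u j = 0 := by
    simp only [hu, Finset.sum_sub_distrib, hπsum, hπ'sum, sub_self]
  have heq1 : ∀ j, ∑ i, u i * W i j = u j - q j := by
    intro j
    have h1 : ∑ i, u i * W i j = (∑ i, π' i * W i j) - ∑ i, π i * W i j := by
      rw [← Finset.sum_sub_distrib]
      exact Finset.sum_congr rfl fun i _ => by simp only [hu]; ring
    rw [h1, hstat, hstat' j]
    simp only [hu, hq]; ring
  -- the pairing identity
  have hkey : ∀ j, ∑ k, q k * M k j = - M j j * (u j - q j) := by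
    intro j
    have way2 : ∑ i, u i * (M i j - ∑ k, W i k * M k j) = ∑ k, q k * M k j := by
      have e1 : ∑ i, u i * (M i j - ∑ k, W i k * M k j)
          = (∑ i, u i * M i j) - ∑ i, ∑ k, u i * (W i k * M k j) := by
        rw [← Finset.sum_sub_distrib]
        refine Finset.sum_congr rfl fun i _ => ?_
        rw [mul_sub, Finset.mul_sum]
      rw [e1, Finset.sum_comm]
      have e2 : ∀ k, ∑ i, u i * (W i k * M k j) = (u k - q k) * M k j := by
        intro k
        rw [← heq1 k, Finset.sum_mul]
        exact Finset.sum_congr rfl fun i _ => by ring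
      rw [Finset.sum_congr rfl fun k _ => e2 k, ← Finset.sum_sub_distrib]
      exact Finset.sum_congr rfl fun k _ => by ring
    have way1 : ∑ i, u i * (M i j - ∑ k, W i k * M k j) = - M j j * (u j - q j) := by
      have e3 : ∀ i, u i * (M i j - ∑ k, W i k * M k j) = u i - u i * W i j * M j j := by
        intro i; rw [hC i j]; ring
      rw [Finset.sum_congr rfl fun i _ => e3 i, Finset.sum_sub_distrib, hsum_u]
      have e4 : ∑ i, u i * W i j * M j j = (u j - q j) * M j j := by
        rw [← heq1 j, Finset.sum_mul]
      rw [e4]; ring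
    rw [← way2, way1]
  -- the exact formula, step 1
  have hformula : ∀ j, u j = q j - π j * ∑ k, q k * M k j := by
    intro j
    have hk := hkey j
    have hd := hD j
    linear_combination (π j) * hk - (u j - q j) * hd
  -- value of the sum
  have hSval : ∀ j, ∑ k, q k * M k j
      = θ * π' r * (M c j - (M r j - 1 + W r j * M j j)) := by
    intro j
    have e1 : ∀ k, q k * M k j
        = θ * π' r * ((if k = c then M k j else 0) - W r k * M k j) := by
      intro k; simp only [hq]; split_ifs <;> ring
    rw [Finset.sum_congr rfl fun k _ => e1 k, ← Finset.mul_sum, Finset.sum_sub_distrib,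
      Finset.sum_ite_eq' Finset.univ c, hC r j]
    simp
  -- the final exact formula
  have hufin : ∀ j, u j
      = θ * π' r * ((if j = c then 1 else 0) - π j * (M c j - M r j + 1)) := by
    intro j
    have hd := hD j
    rw [hformula j, hSval j]
    simp only [hq]
    linear_combination (θ * π' r * W r j) * hd
  -- bound on π' r
  have hbound : π' r * (1 - θ) ≤ π r := by
    have hr := hufin r
    rw [if_neg hrc] at hr
    simp only [hu] at hr
    have hd := hD r
    have h1 := hπ'pos r
    have h2 := hπpos r
    have h3 := hMpos c r
    nlinarith [mul_pos (mul_pos hθ0 h1) (mul_pos h2 h3), mul_pos (mul_pos hθ0 h1) h2]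
  have ht : θ * π' r ≤ π r * (θ / (1 - θ)) := by
    rw [mul_div_assoc'] at *
    rw [le_div_iff₀ h1θ]
    calc θ * π' r * (1 - θ) = θ * (π' r * (1 - θ)) := by ring
      _ ≤ θ * π r := by exact mul_le_mul_of_nonneg_left hbound hθ0.le
      _ = π r * θ := by ring
  -- conclusion
  intro j
  have hπj := hπpos j
  have hπ'r := hπ'pos r
  have htpos : 0 ≤ θ * π' r := by positivity
  rcases eq_or_ne j c with hjc | hjc
  · subst hjc
    simp only [eq_self_iff_true, if_true, mul_zero]
    have hd := hD j
    have hval : π' j - π j = θ * π' r * (π j * (M r j - 1)) := by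
      have h := hufin j
      rw [if_pos rfl] at h
      simp only [hu] at h
      linear_combination h - θ * π' r * hd
    calc |π' j - π j| = (θ * π' r) * (π j * |M r j - 1|) := by
          rw [hval, abs_mul, abs_of_nonneg htpos, abs_mul, abs_of_pos hπj]
      _ ≤ (π r * (θ / (1 - θ))) * (π j * |M r j - 1|) := by
          exact mul_le_mul_of_nonneg_right ht (by positivity)
      _ = π r * π j * (θ / (1 - θ)) * |0 - M r j + 1| := by
          rw [show (0:ℝ) - M r j + 1 = -(M r j - 1) by ring, abs_neg]; ring
  · simp only [if_neg hjc, mul_one]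
    have hval : π' j - π j = -(θ * π' r * (π j * (M c j - M r j + 1))) := by
      have h := hufin j
      rw [if_neg hjc] at h
      simp only [hu] at h
      linear_combination h
    calc |π' j - π j| = (θ * π' r) * (π j * |M c j - M r j + 1|) := by
          rw [hval, abs_neg, abs_mul, abs_of_nonneg htpos, abs_mul, abs_of_pos hπj]
      _ ≤ (π r * (θ / (1 - θ))) * (π j * |M c j - M r j + 1|) := by
          exact mul_le_mul_of_nonneg_right ht (by positivity)
      _ = π r * π j * (θ / (1 - θ)) * |M c j - M r j + 1| := by ring
end

section
/- (Edge-score formula for the asymptotic consensus value.) Let W be an n×n row-stochastic, irreducible, aperiodic matrix with stationary distribution π and mean first passage time matrix (m_{ij}), satisfying rational selfishness at node r. Let W̃ be the single-edge perturbation of W by edge (r,c) with weight θ, assumed irreducible and aperiodic, with stationary distribution π̃. Then for every vector x̃ ∈ ℝ^n, the decrease of the asymptotic consensus value satisfies ⟨π, x̃⟩ − ⟨π̃, x̃⟩ = θ · [ Σ_{j=1}^n π_j · (m_{cj}·(1 − δ{j=c}) − m_{rj} + 1) · x̃_j ] / (m_{rr} + θ·(m_{cr} − m_{rr} + 1)).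 -/
open Matrix Finset Filter

/-- Edge-score formula for the asymptotic consensus value. -/
theorem edge_score_formula {n : ℕ}
    (W : Matrix (Fin n) (Fin n) ℝ) (π : Fin n → ℝ) (M : Matrix (Fin n) (Fin n) ℝ)
    (hW : RowStochastic W) (hprim : Primitive W) (hπ : IsStationaryDist W π) (hM : IsMFPT W M)
    (r c : Fin n) (hrc : r ≠ c) (hWrc : W r c = 0)
    (θ : ℝ) (hθ0 : 0 < θ) (hθ1 : θ ≤ 1)
    (hself : ∀ j, j ≠ r → W r j < W r r)
    (π' : Fin n → ℝ) (hprim' : Primitive (EdgePerturb W r c θ))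
    (hπ' : IsStationaryDist (EdgePerturb W r c θ) π') :
    ∀ x : Fin n → ℝ,
      (∑ j, π j * x j) - (∑ j, π' j * x j) =
        θ * (∑ j, π j * (M c j * (if j = c then 0 else 1) - M r j + 1) * x j) /
          (M r r + θ * (M c r - M r r + 1)) := by
  obtain ⟨hMpos, hMeq⟩ := hM
  obtain ⟨hπpos, hπsum, hπstat⟩ := hπ
  obtain ⟨hπ'pos, hπ'sum, hπ'stat⟩ := hπ'
  -- componentwise stationarity for π
  have hstat : ∀ k, ∑ i, π i * W i k = π k := fun k => by
    simpa [Matrix.vecMul, dotProduct] using congrFun hπstat k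
  -- componentwise stationarity for π'
  have hstat' : ∀ k, ∑ i, π' i * W i k
      = π' k - θ * π' r * ((if k = c then 1 else 0) - W r k) := by
    intro k
    have h : ∑ i, π' i * EdgePerturb W r c θ i k = π' k := by
      simpa [Matrix.vecMul, dotProduct] using congrFun hπ'stat k
    have h2 : ∀ i, π' i * EdgePerturb W r c θ i k
        = π' i * W i k
          + (if i = r then θ * π' r * ((if k = c then (1:ℝ) else 0) - W r k) else 0) := by
      intro i
      by_cases hi : i = r
      · subst hi; by_cases hk : k = c <;> simp [EdgePerturb, hk] <;> ring
      · simp [EdgePerturb, hi]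
    rw [Finset.sum_congr rfl fun i _ => h2 i, Finset.sum_add_distrib,
      Finset.sum_ite_eq' Finset.univ r] at h
    simp only [Finset.mem_univ, if_true] at h
    linarith
  -- the key identity, applied both to (π, 0) and to (π', θ * π' r)
  have key : ∀ (p : Fin n → ℝ) (e : ℝ), (∑ i, p i = 1) →
      (∀ k, ∑ i, p i * W i k = p k - e * ((if k = c then 1 else 0) - W r k)) →
      ∀ j, p j * M j j = 1 - e * ((if c = j then 0 else M c j) - M r j + 1) := by
    intro p e hsum hst j
    have hWr : ∑ m, (if m ≠ j then W r m * M m j else 0) = M r j - 1 := by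
      have := hMeq r j; linarith
    have hdelta : ∑ m, (if m ≠ j then (if m = c then (1:ℝ) else 0) * M m j else 0)
        = if c = j then 0 else M c j := by
      rw [Finset.sum_eq_single c]
      · by_cases h : c = j <;> simp [h]
      · intro m _ hm; simp [hm]
      · simp
    have h1 : ∑ k, p k * M k j
        = p j * M j j + ∑ k, (if k ≠ j then p k * M k j else 0) := by
      have : ∀ k, p k * M k j
          = (if k = j then p k * M k j else 0) + (if k ≠ j then p k * M k j else 0) := by
        intro k; by_cases hk : k = j <;> simp [hk]
      rw [Finset.sum_congr rfl fun k _ => this k, Finset.sum_add_distrib,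
        Finset.sum_ite_eq' Finset.univ j]
      simp
    have h2 : ∑ k, p k * M k j
        = 1 + ∑ m, (if m ≠ j then (∑ k, p k * W k m) * M m j else 0) := by
      calc ∑ k, p k * M k j
          = ∑ k, (p k + ∑ m, (if m ≠ j then p k * (W k m * M m j) else 0)) := by
            refine Finset.sum_congr rfl fun k _ => ?_
            rw [hMeq k j, mul_add, mul_one, Finset.mul_sum]
            congr 1
            refine Finset.sum_congr rfl fun m _ => ?_
            split_ifs <;> simp
        _ = (∑ k, p k) + ∑ k, ∑ m, (if m ≠ j then p k * (W k m * M m j) else 0) :=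
            Finset.sum_add_distrib
        _ = 1 + ∑ m, ∑ k, (if m ≠ j then p k * (W k m * M m j) else 0) := by
            rw [hsum, Finset.sum_comm]
        _ = 1 + ∑ m, (if m ≠ j then (∑ k, p k * W k m) * M m j else 0) := by
            congr 1
            refine Finset.sum_congr rfl fun m _ => ?_
            split_ifs with hm
            · rw [Finset.sum_mul]
              refine Finset.sum_congr rfl fun k _ => ?_
              ring
            · simp
    have h3 : ∑ m, (if m ≠ j then (∑ k, p k * W k m) * M m j else 0)
        = (∑ m, (if m ≠ j then p m * M m j else 0))
          - e * (if c = j then 0 else M c j) + e * (M r j - 1) := by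
      rw [← hdelta, ← hWr, Finset.mul_sum, Finset.mul_sum, ← Finset.sum_sub_distrib,
        ← Finset.sum_add_distrib]
      refine Finset.sum_congr rfl fun m _ => ?_
      rw [hst m]
      split_ifs <;> ring
    rw [h3] at h2
    rw [h2] at h1
    linarith
  -- Kac's formula for π
  have keyπ : ∀ j, π j * M j j = 1 := by
    intro j
    have := key π 0 hπsum (fun k => by rw [hstat k]; ring) j
    linarith
  -- perturbed identity for π'
  have keyπ' : ∀ j, π' j * M j j
      = 1 - θ * π' r * ((if c = j then 0 else M c j) - M r j + 1) :=
    key π' (θ * π' r) hπ'sum hstat'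
  -- the denominator
  have hD : π' r * (M r r + θ * (M c r - M r r + 1)) = 1 := by
    have h := keyπ' r
    have hcr : (if c = r then (0:ℝ) else M c r) = M c r := by
      simp [Ne.symm hrc]
    rw [hcr] at h
    nlinarith [h]
  have hDne : (M r r + θ * (M c r - M r r + 1)) ≠ 0 := by
    intro h
    rw [h, mul_zero] at hD
    norm_num at hD
  -- componentwise formula for π - π'
  have hdiff : ∀ j, π j - π' j
      = θ * π' r * (π j * (M c j * (if j = c then 0 else 1) - M r j + 1)) := by
    intro j
    have hMjj : M j j ≠ 0 := ne_of_gt (hMpos j j)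
    have hC : (if c = j then (0:ℝ) else M c j) = M c j * (if j = c then 0 else 1) := by
      by_cases h : j = c
      · simp [h]
      · have h' : ¬ c = j := fun hh => h hh.symm
        simp [h, h']
    apply mul_right_cancel₀ hMjj
    have h1 := keyπ j
    have h2 := keyπ' j
    rw [hC] at h2
    calc (π j - π' j) * M j j = π j * M j j - π' j * M j j := by ring
      _ = θ * π' r * (M c j * (if j = c then 0 else 1) - M r j + 1) := by
          rw [h1, h2]; ring
      _ = θ * π' r * (π j * (M c j * (if j = c then 0 else 1) - M r j + 1)) * M j j := by
          linear_combination
            (-(θ * π' r * (M c j * (if j = c then 0 else 1) - M r j + 1))) * h1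
  intro x
  rw [eq_div_iff hDne]
  calc ((∑ j, π j * x j) - ∑ j, π' j * x j) * (M r r + θ * (M c r - M r r + 1))
      = (∑ j, (π j - π' j) * x j) * (M r r + θ * (M c r - M r r + 1)) := by
        rw [← Finset.sum_sub_distrib]
        congr 1
        refine Finset.sum_congr rfl fun j _ => ?_
        ring
    _ = (∑ j, θ * π' r * (π j * (M c j * (if j = c then 0 else 1) - M r j + 1)) * x j)
          * (M r r + θ * (M c r - M r r + 1)) := by
        congr 1
        exact Finset.sum_congr rfl fun j _ => by rw [hdiff j]
    _ = (θ * (π' r * (M r r + θ * (M c r - M r r + 1))))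
          * (∑ j, π j * (M c j * (if j = c then 0 else 1) - M r j + 1) * x j) := by
        rw [Finset.sum_mul, Finset.mul_sum]
        refine Finset.sum_congr rfl fun j _ => ?_
        ring
    _ = θ * (∑ j, π j * (M c j * (if j = c then 0 else 1) - M r j + 1) * x j) := by
        rw [hD]; ring
end

section
/- Let n ≥ 2, let W_kc be the uniformly weighted matrix of the graph G_kc on 2n vertices obtained from the complete graph K_{2n} by deleting the perfect matching C = {(2ℓ−1, 2ℓ) : ℓ = 1,…,n}, with m = |E(G_kc)| edges and eigenvector centrality π. Fix z ∈ [0,1]^n, s ∈ [0,1], and 1 ≤ k ≤ n; set x̃ = z ⊗ 𝟙₂ (the vector duplicating each z_ℓ twice) and x = (s·𝟙 + m·x̃)/(m + k). Then for every subset S ⊆ C with |S| = k, the eigenvector centrality π̃ of the uniformly weighted matrix of G_kc with the edges S added satisfies |⟨π̃, x̃⟩ − ⟨π, x⟩| = (1/(m + k)) · | Σ_{ℓ : (2ℓ−1,2ℓ) ∈ S} z_ℓ − s |. -/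
open Finset

/-- The graph `G_kc` on `2n` vertices: the complete graph `K_{2n}` minus the perfect
matching `C = {(2ℓ, 2ℓ+1) : ℓ = 0,…,n−1}` (vertices `2ℓ` and `2ℓ+1` are partners). -/
def Gkc (n : ℕ) : SimpleGraph (Fin (2 * n)) where
  Adj i j := i ≠ j ∧ (i : ℕ) / 2 ≠ (j : ℕ) / 2
  symm := ⟨by rintro i j ⟨h1, h2⟩; exact ⟨h1.symm, h2.symm⟩⟩
  loopless := ⟨by rintro i ⟨h1, _⟩; exact h1 rfl⟩

/-- `G_kc` with the matching edges `{(2ℓ, 2ℓ+1) : ℓ ∈ T}` added. -/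
def GkcAdd (n : ℕ) (T : Finset (Fin n)) : SimpleGraph (Fin (2 * n)) where
  Adj i j := i ≠ j ∧
    ((i : ℕ) / 2 ≠ (j : ℕ) / 2 ∨ ∃ ℓ ∈ T, (i : ℕ) / 2 = (ℓ : ℕ) ∧ (j : ℕ) / 2 = (ℓ : ℕ))
  symm := ⟨by
    rintro i j ⟨h1, h2⟩
    refine ⟨h1.symm, ?_⟩
    rcases h2 with h2 | ⟨ℓ, hl, ha, hb⟩
    · exact Or.inl h2.symm
    · exact Or.inr ⟨ℓ, hl, hb, ha⟩⟩
  loopless := ⟨by rintro i ⟨h1, _⟩; exact h1 rfl⟩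

noncomputable instance (n : ℕ) : DecidableRel (Gkc n).Adj := Classical.decRel _

noncomputable instance (n : ℕ) (T : Finset (Fin n)) :
    DecidableRel (GkcAdd n T).Adj := Classical.decRel _

/-- The Kronecker product `z ⊗ 𝟙₂ : ℝ^{2n}`, duplicating each entry of `z` twice. -/
def dupVec {n : ℕ} (z : Fin n → ℝ) : Fin (2 * n) → ℝ :=
  fun v => z ⟨(v : ℕ) / 2, by have := v.isLt; omega⟩

def half {n : ℕ} (v : Fin (2*n)) : Fin n := ⟨(v:ℕ)/2, by have := v.isLt; omega⟩

example {n : ℕ} (z : Fin n → ℝ) (v : Fin (2*n)) :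
    (fun v => z ⟨(v : ℕ) / 2, by have := v.isLt; omega⟩ : Fin (2*n) → ℝ) v = z (half v) := rfl

lemma fiber (n : ℕ) (ℓ : Fin n) :
    (Finset.univ.filter (fun v : Fin (2*n) => half v = ℓ)) =
      {⟨2*ℓ, by omega⟩, ⟨2*ℓ+1, by omega⟩} := by
  ext v
  simp [half, Fin.ext_iff]
  omega

lemma sum_dup (n : ℕ) (f : Fin n → ℝ) :
    ∑ v : Fin (2*n), f (half v) = 2 * ∑ ℓ, f ℓ := by
  rw [← Finset.sum_fiberwise Finset.univ half (fun v => f (half v))]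
  rw [Finset.mul_sum]
  refine Finset.sum_congr rfl fun ℓ _ => ?_
  rw [fiber]
  rw [Finset.sum_pair (by simp [Fin.ext_iff])]
  have h1 : half (⟨2*ℓ, by omega⟩ : Fin (2*n)) = ℓ := by simp [half, Fin.ext_iff]
  have h2 : half (⟨2*ℓ+1, by omega⟩ : Fin (2*n)) = ℓ := by simp [half, Fin.ext_iff]; omega
  rw [h1, h2]; ring

lemma Gkc_nbr (n : ℕ) (v : Fin (2*n)) :
    (Gkc n).neighborFinset v = Finset.univ.filter (fun j => half j ≠ half v) := by
  ext j
  rw [SimpleGraph.mem_neighborFinset]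
  simp [Gkc, half, Fin.ext_iff, SimpleGraph.mem_neighborFinset]
  omega

lemma Gkc_degree (n : ℕ) (v : Fin (2*n)) : (Gkc n).degree v = 2*n - 2 := by
  rw [SimpleGraph.degree, Gkc_nbr]
  have h := Finset.card_filter_add_card_filter_not
    (s := (Finset.univ : Finset (Fin (2*n)))) (p := fun j => half j = half v)
  rw [fiber n (half v)] at h
  rw [Finset.card_pair (by simp [Fin.ext_iff])] at h
  simp only [Finset.card_univ, Fintype.card_fin] at h
  have hv := v.isLt
  have : (Finset.filter (fun j => ¬ half j = half v) Finset.univ).card = 2*n - 2 := by omega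
  convert this using 2

lemma GkcAdd_degree (n : ℕ) (T : Finset (Fin n)) (v : Fin (2*n)) :
    (GkcAdd n T).degree v = 2*n - 2 + (if half v ∈ T then 1 else 0) := by
  by_cases hv : half v ∈ T
  · have hnbr : (GkcAdd n T).neighborFinset v = Finset.univ.filter (fun j => j ≠ v) := by
      ext j
      rw [SimpleGraph.mem_neighborFinset]
      simp only [SimpleGraph.mem_neighborFinset, GkcAdd, Finset.mem_filter, Finset.mem_univ,
        true_and]
      constructor
      · rintro ⟨h1, _⟩; exact h1.symm
      · intro h1
        refine ⟨h1.symm, ?_⟩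
        by_cases h2 : (v:ℕ)/2 = (j:ℕ)/2
        · exact Or.inr ⟨half v, hv, by simp [half], by simp [half, ← h2]⟩
        · exact Or.inl h2
    rw [SimpleGraph.degree, hnbr, if_pos hv]
    rw [Finset.filter_ne' Finset.univ v, Finset.card_erase_of_mem (Finset.mem_univ v)]
    simp only [Finset.card_univ, Fintype.card_fin]
    have := v.isLt; omega
  · have hnbr : (GkcAdd n T).neighborFinset v = Finset.univ.filter (fun j => half j ≠ half v) := by
      ext j
      rw [SimpleGraph.mem_neighborFinset]
      simp only [SimpleGraph.mem_neighborFinset, GkcAdd, Finset.mem_filter, Finset.mem_univ,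
        true_and]
      constructor
      · rintro ⟨h1, h2 | ⟨ℓ, hℓ, ha, hb⟩⟩
        · simp [half, Fin.ext_iff]; omega
        · exact absurd (show half v = ℓ by simp [half, Fin.ext_iff, ha]) (by rintro rfl; exact hv hℓ)
      · intro h1
        have : (v:ℕ)/2 ≠ (j:ℕ)/2 := by
          intro h; exact h1 (by simp [half, Fin.ext_iff, h])
        exact ⟨by simp [Fin.ext_iff]; omega, Or.inl this⟩
    rw [SimpleGraph.degree, hnbr, if_neg hv]
    have h := Finset.card_filter_add_card_filter_not
      (s := (Finset.univ : Finset (Fin (2*n)))) (p := fun j => half j = half v)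
    rw [fiber n (half v)] at h
    rw [Finset.card_pair (by simp [Fin.ext_iff])] at h
    simp only [Finset.card_univ, Fintype.card_fin] at h
    have hv2 := v.isLt
    have : (Finset.filter (fun j => ¬ half j = half v) Finset.univ).card = 2*n - 2 + 0 := by omega
    convert this using 2

lemma Gkc_card (n : ℕ) : (Gkc n).edgeFinset.card = n * (2*n - 2) := by
  have h := SimpleGraph.sum_degrees_eq_twice_card_edges (Gkc n)
  simp only [Gkc_degree] at h
  rw [Finset.sum_const, Finset.card_univ, Fintype.card_fin, smul_eq_mul, mul_assoc] at h
  exact (Nat.eq_of_mul_eq_mul_left two_pos h).symm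

/-- For every `S ⊆ C` with `|S| = k` (encoded as `T ⊆ {1,…,n}` with
`|T| = k`), with `x̃ = z ⊗ 𝟙₂`, `x = (s·𝟙 + m·x̃)/(m + k)`:
`|⟨π̃, x̃⟩ − ⟨π, x⟩| = (1/(m+k)) · |∑_{ℓ∈T} z ℓ − s|`. -/
theorem kssp_reduction_objective (n : ℕ) (hn : 2 ≤ n)
    (z : Fin n → ℝ) (hz : ∀ ℓ, z ℓ ∈ Set.Icc (0 : ℝ) 1)
    (s : ℝ) (hs : s ∈ Set.Icc (0 : ℝ) 1)
    (k : ℕ) (hk1 : 1 ≤ k) (hkn : k ≤ n)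
    (T : Finset (Fin n)) (hT : T.card = k) :
    let m : ℝ := ((Gkc n).edgeFinset.card : ℝ)
    let π : Fin (2 * n) → ℝ := fun v => ((Gkc n).degree v : ℝ) / (2 * m)
    let π' : Fin (2 * n) → ℝ := fun v => ((GkcAdd n T).degree v : ℝ) / (2 * (m + k))
    let x' : Fin (2 * n) → ℝ := dupVec z
    let x : Fin (2 * n) → ℝ := fun v => (s * 1 + m * x' v) / (m + k)
    |(∑ v, π' v * x' v) - (∑ v, π v * x v)| =
      (1 / (m + k)) * |(∑ ℓ ∈ T, z ℓ) - s| := by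
  intro m π π' x' x
  have hd : ((2*n - 2 : ℕ) : ℝ) = 2*(n:ℝ) - 2 := by
    have : 2 ≤ 2*n := by omega
    push_cast [Nat.cast_sub this]
    ring
  have hm : m = (n:ℝ) * (2*(n:ℝ) - 2) := by
    show ((Gkc n).edgeFinset.card : ℝ) = _
    rw [Gkc_card n]
    push_cast [hd]
    ring
  have hmpos : 0 < m := by
    rw [hm]
    have : (2:ℝ) ≤ (n:ℝ) := by exact_mod_cast hn
    nlinarith
  have hkpos : (0:ℝ) < k := by exact_mod_cast hk1
  have hmk : 0 < m + k := by linarith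
  set Z := ∑ ℓ, z ℓ with hZ
  set ZT := ∑ ℓ ∈ T, z ℓ with hZT
  -- the sum with π'
  have h1 : (∑ v, π' v * x' v) =
      2 * ∑ ℓ : Fin n, (2*(n:ℝ) - 2 + (if ℓ ∈ T then 1 else 0)) / (2*(m+k)) * z ℓ := by
    rw [← sum_dup n (fun ℓ => (2*(n:ℝ) - 2 + (if ℓ ∈ T then 1 else 0)) / (2*(m+k)) * z ℓ)]
    refine Finset.sum_congr rfl fun v _ => ?_
    show ((GkcAdd n T).degree v : ℝ) / (2 * (m + k)) * dupVec z v = _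
    rw [GkcAdd_degree n T v]
    have : dupVec z v = z (half v) := rfl
    rw [this]
    push_cast [hd]
    split <;> norm_num
  have h2 : (∑ v, π v * x v) =
      2 * ∑ ℓ : Fin n, (2*(n:ℝ) - 2) / (2*m) * ((s * 1 + m * z ℓ) / (m + k)) := by
    rw [← sum_dup n (fun ℓ => (2*(n:ℝ) - 2) / (2*m) * ((s * 1 + m * z ℓ) / (m + k)))]
    refine Finset.sum_congr rfl fun v _ => ?_
    show ((Gkc n).degree v : ℝ) / (2 * m) * ((s * 1 + m * dupVec z v) / (m + k)) = _
    rw [Gkc_degree n v, hd]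
    rfl
  have hsum1 : ∑ ℓ : Fin n, (2*(n:ℝ) - 2 + (if ℓ ∈ T then 1 else 0)) / (2*(m+k)) * z ℓ
      = ((2*(n:ℝ) - 2) * Z + ZT) / (2*(m+k)) := by
    have : ∀ ℓ : Fin n, (2*(n:ℝ) - 2 + (if ℓ ∈ T then 1 else 0)) / (2*(m+k)) * z ℓ
        = (2*(n:ℝ) - 2) / (2*(m+k)) * z ℓ + (if ℓ ∈ T then z ℓ / (2*(m+k)) else 0) := by
      intro ℓ
      split <;> ring
    rw [Finset.sum_congr rfl fun ℓ _ => this ℓ, Finset.sum_add_distrib, ← Finset.mul_sum,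
      Finset.sum_ite_mem, Finset.univ_inter, ← Finset.sum_div, ← hZ, ← hZT]
    ring
  have hsum2 : ∑ ℓ : Fin n, (2*(n:ℝ) - 2) / (2*m) * ((s * 1 + m * z ℓ) / (m + k))
      = (2*(n:ℝ) - 2) / (2*m) * (((n:ℝ) * s + m * Z) / (m + k)) := by
    have : ∀ ℓ : Fin n, (2*(n:ℝ) - 2) / (2*m) * ((s * 1 + m * z ℓ) / (m + k))
        = (2*(n:ℝ) - 2) / (2*m*(m+k)) * s + (2*(n:ℝ) - 2) / (2*m*(m+k)) * m * z ℓ := by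
      intro ℓ
      field_simp
    rw [Finset.sum_congr rfl fun ℓ _ => this ℓ, Finset.sum_add_distrib, Finset.sum_const,
      Finset.card_univ, Fintype.card_fin, ← Finset.mul_sum, ← hZ]
    have hm0 := hmpos.ne'
    have hmk0 := hmk.ne'
    rw [show (2*(n:ℝ)-2)/(2*m*(m+k)) = (2*(n:ℝ)-2)/(2*m) * (1/(m+k)) by
      rw [div_mul_div_comm, mul_one], nsmul_eq_mul]
    ring
  have hn' : (0:ℝ) < 2*(n:ℝ) - 2 := by
    have : (2:ℝ) ≤ (n:ℝ) := by exact_mod_cast hn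
    linarith
  have key : (∑ v, π' v * x' v) - (∑ v, π v * x v) = (ZT - s) * (1/(m+k)) := by
    have e6 : (n:ℝ) ≠ 0 := by
      have : (2:ℝ) ≤ (n:ℝ) := by exact_mod_cast hn
      linarith
    have hr : (2*(n:ℝ)-2)/(2*m) = 1/(2*n) := by
      rw [div_eq_div_iff (mul_ne_zero two_ne_zero hmpos.ne') (mul_ne_zero two_ne_zero e6), hm]
      ring
    have hq : 1/(2*(n:ℝ)) * ((n*s + m*Z)/(m+k)) = (s + (2*n-2)*Z)/(2*(m+k)) := by
      rw [div_mul_div_comm, one_mul, div_eq_div_iff (mul_ne_zero (mul_ne_zero two_ne_zero e6)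
        hmk.ne') (mul_ne_zero two_ne_zero hmk.ne'), hm]
      ring
    have hmk0 := hmk.ne'
    rw [h1, h2, hsum1, hsum2, hr, hq]
    field_simp
    ring
  rw [key, abs_mul, abs_of_pos (by positivity : (0:ℝ) < 1/(m+k)), mul_comm]
end

section
/- (Correctness of the reduction kSSP ∝ DIVER.) Let n ≥ 2, z ∈ [0,1]^n, s ∈ [0,1], 1 ≤ k ≤ n. Let G_kc be the complete graph on 2n vertices minus the perfect matching C = {(2ℓ−1, 2ℓ) : ℓ = 1,…,n}, with m edges and eigenvector centrality π of its uniformly weighted matrix; set x̃ = z ⊗ 𝟙₂ and x = (s·𝟙 + m·x̃)/(m + k). Then min over subsets S ⊆ C with |S| = k of |⟨π̃(S), x̃⟩ − ⟨π, x⟩| equals 0 if and only if there exists a subset T ⊆ {1,…,n} with |T| = k and Σ_{ℓ∈T} z_ℓ = s, where π̃(S) is the eigenvector centrality of the uniformly weighted matrix of G_kc with the k edges S added. -/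
open Finset

/- ### Auxiliary lemmas -/

def pairEquiv (n : ℕ) : Fin n × Fin 2 ≃ Fin (2 * n) :=
  finProdFinEquiv.trans (finCongr (mul_comm n 2))

lemma pairEquiv_val (n : ℕ) (p : Fin n × Fin 2) :
    ((pairEquiv n p : Fin (2 * n)) : ℕ) = (p.2 : ℕ) + 2 * (p.1 : ℕ) := by
  simp [pairEquiv, finProdFinEquiv]

/-- A sum over `Fin (2n)` of a function factoring through `v ↦ v / 2` is twice
the corresponding sum over `Fin n`. -/
lemma sum_halves (n : ℕ) (f : Fin (2 * n) → ℝ) (g : Fin n → ℝ)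
    (hf : ∀ (v : Fin (2 * n)) (ℓ : Fin n), (v : ℕ) / 2 = (ℓ : ℕ) → f v = g ℓ) :
    ∑ v, f v = 2 * ∑ ℓ, g ℓ := by
  rw [← Equiv.sum_comp (pairEquiv n) f, Fintype.sum_prod_type]
  have key : ∀ p : Fin n × Fin 2, f (pairEquiv n p) = g p.1 := by
    intro p
    apply hf
    rw [pairEquiv_val]
    omega
  simp only [key, Fin.sum_univ_two]
  rw [Finset.mul_sum]
  congr 1; ext ℓ; ring

lemma card_pair_filter (n : ℕ) (v : Fin (2 * n)) :
    (univ.filter (fun j : Fin (2 * n) => (j : ℕ) / 2 = (v : ℕ) / 2)).card = 2 := by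
  have hv := v.isLt
  have h1 : 2 * ((v : ℕ) / 2) < 2 * n := by omega
  have h2 : 2 * ((v : ℕ) / 2) + 1 < 2 * n := by omega
  have : (univ.filter (fun j : Fin (2 * n) => (j : ℕ) / 2 = (v : ℕ) / 2)) =
      {⟨2 * ((v : ℕ) / 2), h1⟩, ⟨2 * ((v : ℕ) / 2) + 1, h2⟩} := by
    ext j
    simp only [mem_filter, mem_univ, true_and, mem_insert, mem_singleton, Fin.ext_iff]
    omega
  rw [this]
  rw [Finset.card_insert_of_notMem (by simp [Fin.ext_iff]), Finset.card_singleton]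

lemma deg_Gkc (n : ℕ) (v : Fin (2 * n)) : (Gkc n).degree v = 2 * n - 2 := by
  rw [← SimpleGraph.card_neighborFinset_eq_degree, SimpleGraph.neighborFinset_eq_filter]
  have : (univ.filter ((Gkc n).Adj v)) =
      univ \ (univ.filter (fun j : Fin (2 * n) => (j : ℕ) / 2 = (v : ℕ) / 2)) := by
    ext j
    simp only [mem_filter, mem_univ, true_and, mem_sdiff]
    constructor
    · rintro ⟨h1, h2⟩; exact fun h' => h2 h'.symm
    · intro h; exact ⟨fun h' => h (by rw [h']), fun h' => h h'.symm⟩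
  rw [this, Finset.card_sdiff_of_subset (Finset.subset_univ _), card_pair_filter]
  simp

lemma deg_GkcAdd (n : ℕ) (T : Finset (Fin n)) (v : Fin (2 * n)) :
    (GkcAdd n T).degree v =
      if (⟨(v : ℕ) / 2, by have := v.isLt; omega⟩ : Fin n) ∈ T then 2 * n - 1
      else 2 * n - 2 := by
  rw [← SimpleGraph.card_neighborFinset_eq_degree, SimpleGraph.neighborFinset_eq_filter]
  split_ifs with hT
  · have : (univ.filter ((GkcAdd n T).Adj v)) = univ \ {v} := by
      ext j
      simp only [mem_filter, mem_univ, true_and, mem_sdiff, mem_singleton]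
      constructor
      · rintro ⟨h1, _⟩; exact fun h => h1 (h ▸ rfl)
      · intro h
        refine ⟨fun h' => h h'.symm, ?_⟩
        by_cases hj : (v : ℕ) / 2 = (j : ℕ) / 2
        · exact Or.inr ⟨_, hT, rfl, hj.symm⟩
        · exact Or.inl hj
    rw [this, Finset.card_sdiff_of_subset (by simp)]
    simp
  · have : (univ.filter ((GkcAdd n T).Adj v)) =
        univ \ (univ.filter (fun j : Fin (2 * n) => (j : ℕ) / 2 = (v : ℕ) / 2)) := by
      ext j
      simp only [mem_filter, mem_univ, true_and, mem_sdiff]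
      constructor
      · rintro ⟨h1, h2 | ⟨ℓ, hl, ha, hb⟩⟩
        · exact fun h' => h2 h'.symm
        · exfalso
          apply hT
          have : (⟨(v : ℕ) / 2, by have := v.isLt; omega⟩ : Fin n) = ℓ := by
            exact Fin.ext ha
          rw [this]; exact hl
      · intro h
        exact ⟨fun h' => h (by rw [h']), Or.inl fun h' => h h'.symm⟩
    rw [this, Finset.card_sdiff_of_subset (Finset.subset_univ _), card_pair_filter]
    simp

lemma card_edges_Gkc (n : ℕ) : (Gkc n).edgeFinset.card = n * (2 * n - 2) := by
  have h := SimpleGraph.sum_degrees_eq_twice_card_edges (Gkc n)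
  simp only [deg_Gkc, Finset.sum_const, Finset.card_univ, Fintype.card_fin,
    smul_eq_mul] at h
  rw [mul_assoc] at h
  omega

/-- Correctness of the reduction kSSP ∝ DIVER. The minimum of the
DIVER objective over all `k`-subsets `S` of the matching `C` (encoded as `k`-subsets `T`
of `{1,…,n}`) is `0` iff some `k` of the `z ℓ` sum to `s`. -/
theorem kssp_diver_reduction (n : ℕ) (hn : 2 ≤ n)
    (z : Fin n → ℝ) (hz : ∀ ℓ, z ℓ ∈ Set.Icc (0 : ℝ) 1)
    (s : ℝ) (hs : s ∈ Set.Icc (0 : ℝ) 1)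
    (k : ℕ) (hk1 : 1 ≤ k) (hkn : k ≤ n) :
    letI m : ℝ := ((Gkc n).edgeFinset.card : ℝ)
    letI π : Fin (2 * n) → ℝ := fun v => ((Gkc n).degree v : ℝ) / (2 * m)
    letI x' : Fin (2 * n) → ℝ := dupVec z
    letI x : Fin (2 * n) → ℝ := fun v => (s * 1 + m * x' v) / (m + k)
    ((Finset.univ : Finset (Fin n)).powersetCard k).inf'
        (by
          rw [Finset.powersetCard_nonempty]
          simpa using hkn)
        (fun T =>
          |(∑ v, (((GkcAdd n T).degree v : ℝ) / (2 * (m + k))) * x' v) -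
            (∑ v, π v * x v)|) = 0 ↔
      ∃ T : Finset (Fin n), T.card = k ∧ ∑ ℓ ∈ T, z ℓ = s := by
  beta_reduce
  set m : ℝ := ((Gkc n).edgeFinset.card : ℝ) with hmdef
  have hm : m = (n : ℝ) * (2 * (n : ℝ) - 2) := by
    rw [hmdef, card_edges_Gkc]
    have h2 : (2 : ℕ) ≤ 2 * n := by omega
    push_cast [Nat.cast_sub h2]
    ring
  have hnR : (2 : ℝ) ≤ (n : ℝ) := by exact_mod_cast hn
  have hmpos : 0 < m := by rw [hm]; nlinarith
  have hmk : (0 : ℝ) < m + k := by positivity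
  have hmkne : m + (k : ℝ) ≠ 0 := ne_of_gt hmk
  have hmne : m ≠ 0 := ne_of_gt hmpos
  set Z : ℝ := ∑ ℓ, z ℓ with hZ
  -- the degree casts
  have hc1 : ((2 * n - 1 : ℕ) : ℝ) = 2 * (n : ℝ) - 1 := by
    have : (1 : ℕ) ≤ 2 * n := by omega
    push_cast [Nat.cast_sub this]; ring
  have hc2 : ((2 * n - 2 : ℕ) : ℝ) = 2 * (n : ℝ) - 2 := by
    have : (2 : ℕ) ≤ 2 * n := by omega
    push_cast [Nat.cast_sub this]; ring
  -- the second sum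
  have hB : (∑ v : Fin (2 * n), ((Gkc n).degree v : ℝ) / (2 * m) *
      ((s * 1 + m * dupVec z v) / (m + (k : ℝ)))) = (s + (2 * (n : ℝ) - 2) * Z) / (m + k) := by
    rw [sum_halves n _
        (fun ℓ => (2 * (n : ℝ) - 2) / (2 * m) * ((s * 1 + m * z ℓ) / (m + k)))]
    · have hsum : ∑ ℓ : Fin n,
          (2 * (n : ℝ) - 2) / (2 * m) * ((s * 1 + m * z ℓ) / (m + k)) =
          (2 * (n : ℝ) - 2) / (2 * m * (m + k)) * ((n : ℝ) * s + m * Z) := by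
        rw [Finset.mul_sum]
        rw [Finset.sum_congr rfl (fun ℓ _ => by
          field_simp
          try ring : ∀ ℓ ∈ (univ : Finset (Fin n)),
            (2 * (n : ℝ) - 2) / (2 * m) * ((s * 1 + m * z ℓ) / (m + k)) =
            (2 * (n : ℝ) - 2) / (2 * m * (m + k)) * (s + m * z ℓ))]
        rw [← Finset.mul_sum, Finset.sum_add_distrib, Finset.sum_const,
          ← Finset.mul_sum]
        simp [hZ, mul_comm]
      rw [hsum]
      field_simp
      rw [hm]; ring
    · intro v ℓ hvl
      have h2 : dupVec z v = z ℓ := congrArg z (Fin.ext hvl)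
      rw [deg_Gkc, hc2, h2]
  -- the first sum
  have hA : ∀ T : Finset (Fin n),
      (∑ v : Fin (2 * n), (((GkcAdd n T).degree v : ℝ) / (2 * (m + (k : ℝ)))) * dupVec z v) =
      ((2 * (n : ℝ) - 2) * Z + ∑ ℓ ∈ T, z ℓ) / (m + k) := by
    intro T
    rw [sum_halves n _
        (fun ℓ => ((2 * (n : ℝ) - 2) + if ℓ ∈ T then 1 else 0) / (2 * (m + k)) * z ℓ)]
    · have hsum : ∑ ℓ : Fin n,
          ((2 * (n : ℝ) - 2) + if ℓ ∈ T then 1 else 0) / (2 * (m + k)) * z ℓ =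
          ((2 * (n : ℝ) - 2) * Z + ∑ ℓ ∈ T, z ℓ) / (2 * (m + k)) := by
        rw [Finset.sum_congr rfl (fun ℓ _ => by
          split_ifs <;> field_simp <;> try ring : ∀ ℓ ∈ (univ : Finset (Fin n)),
            ((2 * (n : ℝ) - 2) + if ℓ ∈ T then 1 else 0) / (2 * (m + k)) * z ℓ =
            ((2 * (n : ℝ) - 2) * z ℓ + if ℓ ∈ T then z ℓ else 0) / (2 * (m + k)))]
        rw [← Finset.sum_div, Finset.sum_add_distrib, ← Finset.mul_sum,
          Finset.sum_ite_mem, Finset.univ_inter]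
      rw [hsum]
      field_simp
      try ring
    · intro v ℓ hvl
      have hfin : (⟨(v : ℕ) / 2, by have := v.isLt; omega⟩ : Fin n) = ℓ := Fin.ext hvl
      have h2 : dupVec z v = z ℓ := congrArg z (Fin.ext hvl)
      rw [deg_GkcAdd, hfin, h2]
      split_ifs with hT
      · rw [hc1]; ring_nf
      · rw [hc2]; ring_nf
  -- rewrite the objective
  have hobj : ∀ T ∈ (Finset.univ : Finset (Fin n)).powersetCard k,
      |(∑ v : Fin (2 * n), (((GkcAdd n T).degree v : ℝ) / (2 * (m + (k : ℝ)))) * dupVec z v) -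
        (∑ v : Fin (2 * n), ((Gkc n).degree v : ℝ) / (2 * m) *
          ((s * 1 + m * dupVec z v) / (m + (k : ℝ))))| = |(∑ ℓ ∈ T, z ℓ) - s| / (m + k) := by
    intro T _
    rw [hA T, hB, div_sub_div_same, abs_div, abs_of_pos hmk]
    congr 2
    ring
  rw [Finset.inf'_congr _ rfl hobj]
  constructor
  · intro h
    obtain ⟨T, hTmem, hTeq⟩ := Finset.exists_mem_eq_inf'
      (s := (Finset.univ : Finset (Fin n)).powersetCard k) _
      (fun T => |(∑ ℓ ∈ T, z ℓ) - s| / (m + k))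
    rw [hTeq] at h
    refine ⟨T, (Finset.mem_powersetCard_univ).mp hTmem, ?_⟩
    have h1 : |(∑ ℓ ∈ T, z ℓ) - s| = 0 := by
      rcases div_eq_zero_iff.mp h with h' | h'
      · exact h'
      · exact absurd h' hmkne
    linarith [abs_eq_zero.mp h1]
  · rintro ⟨T, hTk, hTs⟩
    have hTmem : T ∈ (Finset.univ : Finset (Fin n)).powersetCard k :=
      (Finset.mem_powersetCard_univ).mpr hTk
    apply le_antisymm
    · calc _ ≤ |(∑ ℓ ∈ T, z ℓ) - s| / (m + k) := Finset.inf'_le _ hTmem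
        _ = 0 := by rw [hTs, sub_self, abs_zero, zero_div]
    · apply Finset.le_inf'
      intro b _
      positivity
end
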